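/- Let r ≥ 1 and let (A₁, …, A_r) ∈ Ũ₃(ℂ)^r, with Aᵢ having entries [[aᵢ,bᵢ,cᵢ],[0,dᵢ,eᵢ],[0,0,1]]. Assume that: (i) it is not the case that cᵢ = eᵢ = 0 for all i; (ii) it is not the case that bᵢ = eᵢ = 0 for all i; and (iii) it is not the case that bᵢ = cᵢ = 0 for all i. If x, y ∈ ℂ^× are such that conjugation by the diagonal matrix diag(x, y, 1) fixes Aᵢ for every i (i.e. diag(x,y,1)·Aᵢ·diag(x,y,1)⁻¹ = Aᵢ for all i), then x = 1 and y = 1. In other words, the conjugation action of 𝔾_m × 𝔾_m on tuples outside D₁ ∪ D₂ ∪ D₃ is free. -/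

import Mathlib

open Matrix

/-- `3 × 3` matrices over `F`. -/
abbrev M3 (F : Type*) := Matrix (Fin 3) (Fin 3) F

/-- Membership in the group `Ũ₃(F)` of upper triangular `3 × 3` matrices
`[[a,b,c],[0,d,e],[0,0,1]]` with `a, d ≠ 0` and `(3,3)`-entry equal to `1`. -/
def inU3 {F : Type*} [Field F] (A : M3 F) : Prop :=
  A 0 0 ≠ 0 ∧ A 1 1 ≠ 0 ∧ A 2 2 = 1 ∧ A 1 0 = 0 ∧ A 2 0 = 0 ∧ A 2 1 = 0

theorem stmt_7 (r : ℕ) (hr : 1 ≤ r) (A : Fin r → M3 ℂ) (hA : ∀ i, inU3 (A i))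
    (h1 : ¬ ∀ i, A i 0 2 = 0 ∧ A i 1 2 = 0)
    (h2 : ¬ ∀ i, A i 0 1 = 0 ∧ A i 1 2 = 0)
    (h3 : ¬ ∀ i, A i 0 1 = 0 ∧ A i 0 2 = 0)
    (x y : ℂ) (hx : x ≠ 0) (hy : y ≠ 0)
    (hfix : ∀ i, !![x, 0, 0; 0, y, 0; 0, 0, 1] * A i * !![x⁻¹, 0, 0; 0, y⁻¹, 0; 0, 0, 1] = A i) :
    x = 1 ∧ y = 1 := by
  have hb : ∀ i, A i 0 1 ≠ 0 → x = y := by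
    intro i h
    have h01 := congrFun (congrFun (hfix i) 0) 1
    simp [Matrix.mul_apply, Fin.sum_univ_three, Matrix.vecMul, dotProduct] at h01
    -- h01 : x * A i 0 1 * y⁻¹ = A i 0 1
    field_simp at h01
    have : (x - y) * A i 0 1 = 0 := by ring_nf; linear_combination A i 0 1 * h01
    rcases mul_eq_zero.mp this with h' | h'
    · exact sub_eq_zero.mp h'
    · exact absurd h' h
  have hc : ∀ i, A i 0 2 ≠ 0 → x = 1 := by
    intro i h
    have h02 := congrFun (congrFun (hfix i) 0) 2
    simp [Matrix.mul_apply, Fin.sum_univ_three, Matrix.vecMul, dotProduct] at h02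
    exact (mul_eq_right₀ h).mp h02
  have he : ∀ i, A i 1 2 ≠ 0 → y = 1 := by
    intro i h
    have h12 := congrFun (congrFun (hfix i) 1) 2
    simp [Matrix.mul_apply, Fin.sum_univ_three, Matrix.vecMul, dotProduct] at h12
    exact (mul_eq_right₀ h).mp h12
  by_cases hE : ∃ i, A i 1 2 ≠ 0
  · obtain ⟨i, hi⟩ := hE
    have hy1 := he i hi
    push_neg at h3
    obtain ⟨j, hj⟩ := h3
    by_cases hbj : A j 0 1 = 0
    · exact ⟨hc j (hj hbj), hy1⟩
    · exact ⟨(hb j hbj).trans hy1, hy1⟩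
  · push_neg at hE
    push_neg at h1 h2
    obtain ⟨i, hi⟩ := h1
    obtain ⟨j, hj⟩ := h2
    have hx1 : x = 1 := by
      rcases eq_or_ne (A i 0 2) 0 with h | h
      · exact absurd (hE i) (hi h)
      · exact hc i h
    have hbj : A j 0 1 ≠ 0 := fun h => (hj h) (hE j)
    exact ⟨hx1, ((hb j hbj).symm.trans hx1)⟩
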